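/- Let M ∈ ℝ^{k×n} have trivial left null space (N(Mᵀ) = {0}), P ∈ ℝ^{r×n}, q ∈ ℝᵏ, d ∈ ℝʳ, and suppose the system Mz = q, Pz ≤ d is feasible. Then there exists z̄ with Mz̄ = q and Pz̄ < d (strict componentwise) if and only if the only pair (u, v) with qᵀu + dᵀv ≤ 0, Mᵀu + Pᵀv = 0, and v ≥ 0 has v = 0. -/

import Mathlib

open Finset
open scoped InnerProductSpace RealInnerProductSpace

set_option linter.unusedVariables false


private lemma cara_aux {E : Type*} [AddCommGroup E] [Module ℝ E] {ι : Type} [Fintype ι]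
    [DecidableEq ι] (a : ι → E) :
    ∀ (m : ℕ) (T : Finset ι), T.card ≤ m → ∀ c : ι → ℝ, (∀ i, 0 ≤ c i) →
      ∃ T' : Finset ι, T' ⊆ T ∧ LinearIndependent ℝ (fun i : T' => a i) ∧
        ∃ c' : ι → ℝ, (∀ i, 0 ≤ c' i) ∧ ∑ i ∈ T', c' i • a i = ∑ i ∈ T, c i • a i := by
  intro m
  induction m with
  | zero =>
    intro T hT c _
    have hTe : T = ∅ := card_eq_zero.mp (Nat.le_zero.mp hT)
    subst hTe
    refine ⟨∅, Finset.Subset.refl _, ?_, fun _ => 0, fun _ => le_refl _, by simp⟩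
    have : IsEmpty ((∅ : Finset ι) : Type) := by simp [isEmpty_subtype]
    exact linearIndependent_empty_type
  | succ m ih =>
    intro T hT c hc
    by_cases hli : LinearIndependent ℝ (fun i : T => a i)
    · exact ⟨T, Finset.Subset.refl _, hli, c, hc, rfl⟩
    have key : ∀ lam : ι → ℝ, ∑ i ∈ T, lam i • a i = 0 → (∃ i ∈ T, 0 < lam i) →
        ∃ T' : Finset ι, T' ⊆ T ∧ LinearIndependent ℝ (fun i : T' => a i) ∧
          ∃ c' : ι → ℝ, (∀ i, 0 ≤ c' i) ∧ ∑ i ∈ T', c' i • a i = ∑ i ∈ T, c i • a i := by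
      intro lam hsum ⟨i₂, hi₂T, hi₂pos⟩
      set S := T.filter (fun i => 0 < lam i) with hSdef
      have hS : S.Nonempty := ⟨i₂, mem_filter.mpr ⟨hi₂T, hi₂pos⟩⟩
      obtain ⟨i₀, hi₀S, hmin⟩ := S.exists_min_image (fun i => c i / lam i) hS
      have hi₀T : i₀ ∈ T := (mem_filter.mp hi₀S).1
      have hlam₀ : 0 < lam i₀ := (mem_filter.mp hi₀S).2
      set t := c i₀ / lam i₀ with htdef
      have ht0 : 0 ≤ t := div_nonneg (hc i₀) hlam₀.le
      set c' : ι → ℝ := fun i => if i ∈ T.erase i₀ then c i - t * lam i else 0 with hc'def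
      have hc' : ∀ i, 0 ≤ c' i := by
        intro i
        by_cases h : i ∈ T.erase i₀
        · simp only [hc'def, if_pos h]
          by_cases hp : 0 < lam i
          · have hmi := hmin i (mem_filter.mpr ⟨mem_of_mem_erase h, hp⟩)
            have h2 := (le_div_iff₀ hp).mp hmi
            linarith
          · push_neg at hp
            nlinarith [hc i]
        · rw [hc'def]
          simp only [if_neg h]
          exact le_refl 0
      have hzero : c i₀ - t * lam i₀ = 0 := by
        rw [htdef, div_mul_cancel₀ _ hlam₀.ne', sub_self]
      have hsum' : ∑ i ∈ T.erase i₀, c' i • a i = ∑ i ∈ T, c i • a i := by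
        have h1 : ∑ i ∈ T.erase i₀, c' i • a i
            = ∑ i ∈ T.erase i₀, (c i - t * lam i) • a i :=
          Finset.sum_congr rfl fun i hi => by rw [hc'def]; simp [hi]
        have h2 : ∑ i ∈ T.erase i₀, (c i - t * lam i) • a i
            = ∑ i ∈ T, (c i - t * lam i) • a i :=
          Finset.sum_erase T (by rw [hzero, zero_smul])
        have h3 : ∑ i ∈ T, (c i - t * lam i) • a i
            = ∑ i ∈ T, c i • a i - t • ∑ i ∈ T, lam i • a i := by
          rw [Finset.smul_sum, ← Finset.sum_sub_distrib]
          exact Finset.sum_congr rfl fun i _ => by rw [sub_smul, smul_smul]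
        rw [h1, h2, h3, hsum, smul_zero, sub_zero]
      have hcard : (T.erase i₀).card ≤ m := by
        have := Finset.card_erase_of_mem hi₀T
        omega
      obtain ⟨T', hsub, hli', c'', hc'', hs⟩ := ih (T.erase i₀) hcard c' hc'
      exact ⟨T', hsub.trans (Finset.erase_subset _ _), hli', c'', hc'', hs.trans hsum'⟩
    obtain ⟨g, hg0, i₁, hgi₁⟩ := Fintype.not_linearIndependent_iff.mp hli
    set lam : ι → ℝ := fun i => if h : i ∈ T then g ⟨i, h⟩ else 0 with hlamdef
    have hlamsum : ∑ i ∈ T, lam i • a i = 0 := by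
      rw [← Finset.sum_attach T fun i => lam i • a i, ← hg0]
      exact Finset.sum_congr rfl fun i _ => by simp [hlamdef, i.2]
    have hlami₁ : lam ↑i₁ = g i₁ := by simp [hlamdef, i₁.2]
    rcases lt_or_gt_of_ne hgi₁ with hneg | hpos
    · refine key (fun i => -lam i) ?_ ⟨↑i₁, i₁.2, by show 0 < -lam ↑i₁; rw [hlami₁]; linarith⟩
      simp only [neg_smul]
      rw [Finset.sum_neg_distrib, hlamsum, neg_zero]
    · exact key lam hlamsum ⟨↑i₁, i₁.2, by rw [hlami₁]; exact hpos⟩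


private lemma cara_top {E : Type*} [AddCommGroup E] [Module ℝ E] {ι : Type} [Fintype ι]
    [DecidableEq ι] (a : ι → E) (c : ι → ℝ) (hc : ∀ i, 0 ≤ c i) :
      ∃ T' : Finset ι, LinearIndependent ℝ (fun i : T' => a i) ∧
        ∃ c' : ι → ℝ, (∀ i, 0 ≤ c' i) ∧ ∑ i ∈ T', c' i • a i = ∑ i, c i • a i := by
  obtain ⟨T', _, hli, c', hc', hsum⟩ :=
    cara_aux a Finset.univ.card Finset.univ le_rfl c hc
  exact ⟨T', hli, c', hc', hsum⟩

private lemma cone_closed {η ι : Type} [Fintype η] [Fintype ι] (a : ι → EuclideanSpace ℝ η) :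
    IsClosed {x : EuclideanSpace ℝ η | ∃ c : ι → ℝ, (∀ i, 0 ≤ c i) ∧ x = ∑ i, c i • a i} := by
  classical
  have hD : ∀ T : Finset ι, LinearIndependent ℝ (fun i : T => a i) →
      IsClosed {x : EuclideanSpace ℝ η | ∃ c : ι → ℝ, (∀ i, 0 ≤ c i) ∧ x = ∑ i ∈ T, c i • a i} := by
    intro T hli
    let f : (T → ℝ) →ₗ[ℝ] EuclideanSpace ℝ η :=
      { toFun := fun g => ∑ i : T, g i • a (i : ι)
        map_add' := fun g h => by
          simp only [Pi.add_apply, add_smul, Finset.sum_add_distrib]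
        map_smul' := fun r g => by
          simp only [Pi.smul_apply, smul_eq_mul, RingHom.id_apply, ← smul_smul, ← Finset.smul_sum] }
    have hker : LinearMap.ker f = ⊥ := by
      rw [LinearMap.ker_eq_bot']
      intro g hg
      funext i
      exact Fintype.linearIndependent_iff.mp hli g hg i
    have hemb := LinearMap.isClosedEmbedding_of_injective hker
    have hK : IsClosed {g : T → ℝ | ∀ i, 0 ≤ g i} := by
      have he : {g : T → ℝ | ∀ i, 0 ≤ g i} = ⋂ i, {g : T → ℝ | 0 ≤ g i} := by
        ext g; simp [Set.mem_iInter]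
      rw [he]
      exact isClosed_iInter fun i => isClosed_le continuous_const (continuous_apply i)
    have himg := hemb.isClosedMap _ hK
    convert himg using 1
    ext x
    constructor
    · rintro ⟨c, hc, rfl⟩
      refine ⟨fun i => c i, fun i => hc i, ?_⟩
      show ∑ i : T, c (i : ι) • a (i : ι) = _
      rw [← Finset.sum_attach T fun i => c i • a i]
      rfl
    · rintro ⟨g, hg, rfl⟩
      refine ⟨fun i => if h : i ∈ T then g ⟨i, h⟩ else 0, fun i => ?_, ?_⟩
      · show 0 ≤ if h : i ∈ T then g ⟨i, h⟩ else 0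
        by_cases h : i ∈ T
        · rw [dif_pos h]; exact hg _
        · rw [dif_neg h]
      · show (∑ i : T, g i • a (i : ι))
            = ∑ i ∈ T, (fun i => if h : i ∈ T then g ⟨i, h⟩ else 0) i • a i
        rw [← Finset.sum_coe_sort T fun i => (fun i => if h : i ∈ T then g ⟨i, h⟩ else 0) i • a i]
        exact Finset.sum_congr rfl fun i _ => by simp only []; rw [dif_pos i.2]
  have hU : {x : EuclideanSpace ℝ η | ∃ c : ι → ℝ, (∀ i, 0 ≤ c i) ∧ x = ∑ i, c i • a i}
      = ⋃ T : Finset ι,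
        (if LinearIndependent ℝ (fun i : T => a i) then
          {x : EuclideanSpace ℝ η | ∃ c : ι → ℝ, (∀ i, 0 ≤ c i) ∧ x = ∑ i ∈ T, c i • a i}
        else ∅) := by
    ext x
    simp only [Set.mem_iUnion, Set.mem_setOf_eq]
    constructor
    · rintro ⟨c, hc, rfl⟩
      obtain ⟨T', hli, c', hc', hsum⟩ := cara_top a c hc
      refine ⟨T', ?_⟩
      rw [if_pos hli]
      exact ⟨c', hc', hsum.symm⟩
    · rintro ⟨T, hx⟩
      by_cases hli : LinearIndependent ℝ (fun i : T => a i)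
      · rw [if_pos hli] at hx
        obtain ⟨c, hc, rfl⟩ := hx
        refine ⟨fun i => if i ∈ T then c i else 0,
          fun i => by dsimp only; split
                      · exact hc i
                      · exact le_rfl, ?_⟩
        have hrw : ∀ i : ι, (fun i => if i ∈ T then c i else 0) i • a i
            = if i ∈ T then c i • a i else 0 := fun i => by
          dsimp only; split <;> simp
        rw [Finset.sum_congr rfl fun i _ => hrw i, Finset.sum_ite_mem, Finset.univ_inter]
      · rw [if_neg hli] at hx
        exact absurd hx (Set.notMem_empty x)
  rw [hU]
  exact isClosed_iUnion_of_finite fun T => by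
    split
    · exact hD T ‹_›
    · exact isClosed_empty



private lemma farkasE {η ι : Type} [Fintype η] [Fintype ι] (a : ι → EuclideanSpace ℝ η)
    (b : EuclideanSpace ℝ η)
    (h : ∀ x : EuclideanSpace ℝ η, (∀ i, 0 ≤ ⟪a i, x⟫_ℝ) → 0 ≤ ⟪b, x⟫_ℝ) :
    ∃ c : ι → ℝ, (∀ i, 0 ≤ c i) ∧ b = ∑ i, c i • a i := by
  classical
  set C : Set (EuclideanSpace ℝ η) :=
    {x : EuclideanSpace ℝ η | ∃ c : ι → ℝ, (∀ i, 0 ≤ c i) ∧ x = ∑ i, c i • a i} with hCdef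
  by_contra hb
  have hbC : b ∉ C := hb
  let K : ConvexCone ℝ (EuclideanSpace ℝ η) :=
    { carrier := C
      smul_mem' := by
        rintro t ht x ⟨c, hc, rfl⟩
        refine ⟨fun i => t * c i, fun i => mul_nonneg ht.le (hc i), ?_⟩
        rw [Finset.smul_sum]
        exact Finset.sum_congr rfl fun i _ => by dsimp only; rw [smul_smul]
      add_mem' := by
        rintro x ⟨c, hc, rfl⟩ y ⟨c', hc', rfl⟩
        refine ⟨fun i => c i + c' i, fun i => add_nonneg (hc i) (hc' i), ?_⟩
        rw [← Finset.sum_add_distrib]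
        exact Finset.sum_congr rfl fun i _ => by dsimp only; rw [add_smul] }
  have hne : (K : Set (EuclideanSpace ℝ η)).Nonempty :=
    ⟨0, ⟨fun _ => 0, fun _ => le_rfl, by simp⟩⟩
  have hcl : IsClosed (K : Set (EuclideanSpace ℝ η)) := cone_closed a
  let K' : ProperCone ℝ (EuclideanSpace ℝ η) :=
    { carrier := C
      add_mem' := fun hx hy => K.add_mem' hx hy
      zero_mem' := ⟨fun _ => 0, fun _ => le_rfl, by simp⟩
      smul_mem' := by
        rintro ⟨t, ht⟩ x ⟨c, hc, rfl⟩
        refine ⟨fun i => t * c i, fun i => mul_nonneg ht (hc i), ?_⟩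
        show t • ∑ i, c i • a i = _
        rw [Finset.smul_sum]
        exact Finset.sum_congr rfl fun i _ => by dsimp only; rw [smul_smul]
      isClosed' := hcl }
  obtain ⟨y, hy, hyb⟩ :=
    ProperCone.hyperplane_separation' K' (x₀ := b) hbC
  have hay : ∀ i, 0 ≤ ⟪a i, y⟫_ℝ := by
    intro i
    refine hy (a i) ⟨fun i' => if i' = i then 1 else 0, fun i' => by positivity, ?_⟩
    have : ∀ i' : ι, (if i' = i then (1:ℝ) else 0) • a i' = if i' = i then a i' else 0 :=
      fun i' => by split <;> simp
    rw [Finset.sum_congr rfl fun i' _ => this i', Finset.sum_ite_eq' Finset.univ i a,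
      if_pos (Finset.mem_univ i)]
  have := h y hay
  linarith

private lemma esum_apply {η ι : Type} [Fintype η] [Fintype ι] (f : ι → EuclideanSpace ℝ η)
    (e : η) : (∑ i, f i) e = ∑ i, f i e := by
  rw [WithLp.ofLp_sum]
  exact Finset.sum_apply e Finset.univ fun i => (f i).ofLp

private lemma farkasFun {η ι : Type} [Fintype η] [Fintype ι] (a : ι → η → ℝ) (b : η → ℝ)
    (h : ∀ x : η → ℝ, (∀ i, 0 ≤ ∑ e, a i e * x e) → 0 ≤ ∑ e, b e * x e) :
    ∃ c : ι → ℝ, (∀ i, 0 ≤ c i) ∧ ∀ e, b e = ∑ i, c i * a i e := by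
  have hinner : ∀ x y : EuclideanSpace ℝ η, ⟪x, y⟫_ℝ = ∑ e, x e * y e := fun x y => by
    simp [PiLp.inner_apply, RCLike.inner_apply, mul_comm]
  obtain ⟨c, hc, hb⟩ := farkasE (fun i => WithLp.toLp 2 (a i))
    (WithLp.toLp 2 b) (by
      intro x hx
      rw [hinner]
      exact h x fun i => by have := hx i; rw [hinner] at this; exact this)
  refine ⟨c, hc, fun e => ?_⟩
  have h1 : (WithLp.toLp 2 b) e
      = (∑ i, c i • WithLp.toLp 2 (a i)) e := by rw [hb]
  rw [esum_apply] at h1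
  simpa using h1



private lemma affineFarkas {k r n : ℕ} (M : Matrix (Fin k) (Fin n) ℝ)
    (P : Matrix (Fin r) (Fin n) ℝ) (q : Fin k → ℝ) (d : Fin r → ℝ) (c : Fin n → ℝ) (γ : ℝ)
    (hfeas : ∃ z, M.mulVec z = q ∧ ∀ j, P.mulVec z j ≤ d j)
    (hcons : ∀ z, M.mulVec z = q → (∀ j, P.mulVec z j ≤ d j) → ∑ l, c l * z l ≤ γ) :
    ∃ u v, (∀ j, 0 ≤ v j) ∧ M.transpose.mulVec u + P.transpose.mulVec v = c ∧
      (∑ i, q i * u i) + (∑ j, d j * v j) ≤ γ := by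
  classical
  set a : ((Fin k ⊕ Fin k) ⊕ (Fin r ⊕ Unit)) → (Fin n ⊕ Unit) → ℝ :=
    Sum.elim
      (Sum.elim (fun i => Sum.elim (fun l => M i l) (fun _ => -q i))
                (fun i => Sum.elim (fun l => -M i l) (fun _ => q i)))
      (Sum.elim (fun j => Sum.elim (fun l => -P j l) (fun _ => d j))
                (fun _ => Sum.elim (fun _ => 0) (fun _ => 1))) with hadef
  set b : (Fin n ⊕ Unit) → ℝ := Sum.elim (fun l => -c l) (fun _ => γ) with hbdef
  have hsplit : ∀ w x : (Fin n ⊕ Unit) → ℝ, (∑ e, w e * x e)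
      = (∑ l, w (Sum.inl l) * x (Sum.inl l)) + w (Sum.inr ()) * x (Sum.inr ()) := by
    intro w x
    rw [Fintype.sum_sum_type]
    simp
  obtain ⟨lam, hlam, hbe⟩ := farkasFun a b (by
    intro x hx
    set z : Fin n → ℝ := fun l => x (Sum.inl l) with hzdef
    set s : ℝ := x (Sum.inr ()) with hsdef
    have hM1 : ∀ i, (∑ l, M i l * z l) = q i * s := by
      intro i
      have hp := hx (Sum.inl (Sum.inl i))
      have hm := hx (Sum.inl (Sum.inr i))
      rw [hsplit] at hp hm
      simp only [hadef, Sum.elim_inl, Sum.elim_inr] at hp hm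
      have hneg : (∑ l, -M i l * z l) = -∑ l, M i l * z l := by
        rw [← Finset.sum_neg_distrib]
        exact Finset.sum_congr rfl fun _ _ => by ring
      rw [hneg] at hm
      linarith
    have hP1 : ∀ j, (∑ l, P j l * z l) ≤ d j * s := by
      intro j
      have hp := hx (Sum.inr (Sum.inl j))
      rw [hsplit] at hp
      simp only [hadef, Sum.elim_inl, Sum.elim_inr] at hp
      have hneg : (∑ l, -P j l * z l) = -∑ l, P j l * z l := by
        rw [← Finset.sum_neg_distrib]
        exact Finset.sum_congr rfl fun _ _ => by ring
      rw [hneg] at hp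
      linarith
    have hs : 0 ≤ s := by
      have hp := hx (Sum.inr (Sum.inr ()))
      rw [hsplit] at hp
      simp only [hadef, Sum.elim_inl, Sum.elim_inr] at hp
      simpa using hp
    rw [hsplit]
    simp only [hbdef, Sum.elim_inl, Sum.elim_inr]
    have hneg : (∑ l, -c l * z l) = -∑ l, c l * z l := by
      rw [← Finset.sum_neg_distrib]
      exact Finset.sum_congr rfl fun _ _ => by ring
    rw [hneg]
    have hgoal : (∑ l, c l * z l) ≤ γ * s := by
      rcases eq_or_lt_of_le hs with hs0 | hs0
      · -- s = 0
        obtain ⟨z₀, hz₀M, hz₀P⟩ := hfeas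
        set A : ℝ := ∑ l, c l * z l with hAdef
        set S₀ : ℝ := ∑ l, c l * z₀ l with hS₀def
        have hA : A ≤ 0 := by
          by_contra hA
          push_neg at hA
          set t : ℝ := max 0 ((γ - S₀) / A + 1) with htdef
          have ht0 : 0 ≤ t := le_max_left _ _
          have ht1 : (γ - S₀) / A + 1 ≤ t := le_max_right _ _
          have hcz : ∑ l, c l * (z₀ + t • z) l = S₀ + t * A := by
            rw [hAdef, hS₀def, Finset.mul_sum, ← Finset.sum_add_distrib]
            exact Finset.sum_congr rfl fun l _ => by
              show c l * (z₀ l + t * z l) = _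
              ring
          have hMz : M.mulVec (z₀ + t • z) = q := by
            funext i
            rw [Matrix.mulVec_add, Matrix.mulVec_smul]
            show M.mulVec z₀ i + t * M.mulVec z i = q i
            have : M.mulVec z i = q i * s := hM1 i
            rw [hz₀M, this, ← hs0]
            ring
          have hPz : ∀ j, P.mulVec (z₀ + t • z) j ≤ d j := by
            intro j
            rw [Matrix.mulVec_add, Matrix.mulVec_smul]
            show P.mulVec z₀ j + t * P.mulVec z j ≤ d j
            have h1 : P.mulVec z j ≤ d j * s := hP1 j
            rw [← hs0] at h1
            nlinarith [hz₀P j]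
          have hle := hcons _ hMz hPz
          rw [hcz] at hle
          have hdiv : (γ - S₀) / A * A = γ - S₀ := div_mul_cancel₀ _ (ne_of_gt hA)
          nlinarith
        rw [← hs0]
        simpa using hA
      · -- 0 < s
        have hMz : M.mulVec (s⁻¹ • z) = q := by
          funext i
          rw [Matrix.mulVec_smul]
          show s⁻¹ * M.mulVec z i = q i
          have : M.mulVec z i = q i * s := hM1 i
          rw [this]
          field_simp
        have hPz : ∀ j, P.mulVec (s⁻¹ • z) j ≤ d j := by
          intro j
          rw [Matrix.mulVec_smul]
          show s⁻¹ * P.mulVec z j ≤ d j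
          have h1 : P.mulVec z j ≤ d j * s := hP1 j
          have h2 : s⁻¹ * P.mulVec z j ≤ s⁻¹ * (d j * s) :=
            mul_le_mul_of_nonneg_left h1 (inv_nonneg.mpr hs)
          have h3 : s⁻¹ * (d j * s) = d j := by field_simp
          linarith
        have hle := hcons _ hMz hPz
        have hcz : ∑ l, c l * (s⁻¹ • z) l = s⁻¹ * ∑ l, c l * z l := by
          rw [Finset.mul_sum]
          exact Finset.sum_congr rfl fun l _ => by
            show c l * (s⁻¹ * z l) = _
            ring
        rw [hcz] at hle
        have h4 : s * (s⁻¹ * ∑ l, c l * z l) = ∑ l, c l * z l := by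
          field_simp
        nlinarith
    linarith)
  -- extract u, v
  set u : Fin k → ℝ :=
    fun i => lam (Sum.inl (Sum.inr i)) - lam (Sum.inl (Sum.inl i)) with hudef
  set v : Fin r → ℝ := fun j => lam (Sum.inr (Sum.inl j)) with hvdef
  have hIsum : ∀ F : ((Fin k ⊕ Fin k) ⊕ (Fin r ⊕ Unit)) → ℝ,
      (∑ I, F I) = ((∑ i, F (Sum.inl (Sum.inl i))) + ∑ i, F (Sum.inl (Sum.inr i)))
        + ((∑ j, F (Sum.inr (Sum.inl j))) + F (Sum.inr (Sum.inr ()))) := by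
    intro F
    rw [Fintype.sum_sum_type, Fintype.sum_sum_type, Fintype.sum_sum_type]
    simp
  refine ⟨u, v, fun j => hlam _, ?_, ?_⟩
  · funext l
    have h1 := hbe (Sum.inl l)
    rw [hIsum] at h1
    simp only [hadef, hbdef, Sum.elim_inl, Sum.elim_inr] at h1
    show M.transpose.mulVec u l + P.transpose.mulVec v l = c l
    have e1 : M.transpose.mulVec u l
        = (∑ i, lam (Sum.inl (Sum.inr i)) * M i l) - ∑ i, lam (Sum.inl (Sum.inl i)) * M i l := by
      show (∑ i, M.transpose l i * u i) = _
      rw [← Finset.sum_sub_distrib]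
      exact Finset.sum_congr rfl fun i _ => by
        rw [Matrix.transpose_apply, hudef]
        ring
    have e2 : P.transpose.mulVec v l = ∑ j, lam (Sum.inr (Sum.inl j)) * P j l := by
      show (∑ j, P.transpose l j * v j) = _
      exact Finset.sum_congr rfl fun j _ => by
        rw [Matrix.transpose_apply, hvdef]
        ring
    have e3 : (∑ i, lam (Sum.inl (Sum.inr i)) * -M i l)
        = -∑ i, lam (Sum.inl (Sum.inr i)) * M i l := by
      rw [← Finset.sum_neg_distrib]
      exact Finset.sum_congr rfl fun _ _ => by ring
    have e4 : (∑ j, lam (Sum.inr (Sum.inl j)) * -P j l)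
        = -∑ j, lam (Sum.inr (Sum.inl j)) * P j l := by
      rw [← Finset.sum_neg_distrib]
      exact Finset.sum_congr rfl fun _ _ => by ring
    rw [e3, e4] at h1
    rw [e1, e2]
    linarith
  · have h2 := hbe (Sum.inr ())
    rw [hIsum] at h2
    simp only [hadef, hbdef, Sum.elim_inl, Sum.elim_inr] at h2
    have e5 : (∑ i, q i * u i)
        = (∑ i, lam (Sum.inl (Sum.inr i)) * q i) - ∑ i, lam (Sum.inl (Sum.inl i)) * q i := by
      rw [← Finset.sum_sub_distrib]
      exact Finset.sum_congr rfl fun i _ => by rw [hudef]; ring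
    have e6 : (∑ j, d j * v j) = ∑ j, lam (Sum.inr (Sum.inl j)) * d j := by
      exact Finset.sum_congr rfl fun j _ => by rw [hvdef]; ring
    have e7 : (∑ i, lam (Sum.inl (Sum.inl i)) * -q i)
        = -∑ i, lam (Sum.inl (Sum.inl i)) * q i := by
      rw [← Finset.sum_neg_distrib]
      exact Finset.sum_congr rfl fun _ _ => by ring
    rw [e7] at h2
    have hτ := hlam (Sum.inr (Sum.inr ()))
    rw [e5, e6]
    linarith



private lemma dot_mulVec_eq {m n : ℕ} (A : Matrix (Fin m) (Fin n) ℝ) (w : Fin m → ℝ)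
    (z : Fin n → ℝ) :
    (∑ l, A.transpose.mulVec w l * z l) = ∑ i, w i * A.mulVec z i := by
  show (∑ l, (∑ i, A.transpose l i * w i) * z l) = ∑ i, w i * ∑ l, A i l * z l
  simp only [Matrix.transpose_apply, Finset.sum_mul, Finset.mul_sum]
  rw [Finset.sum_comm]
  exact Finset.sum_congr rfl fun i _ => Finset.sum_congr rfl fun l _ => by ring

/-- Strict feasibility of a linear system via LP duality: assuming `N(Mᵀ) = {0}` and
feasibility of `Mz = q, Pz ≤ d`, there is `z̄` with `Mz̄ = q, Pz̄ < d` iff the only `(u,v)`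
with `qᵀu + dᵀv ≤ 0`, `Mᵀu + Pᵀv = 0`, `v ≥ 0` has `v = 0`. -/
theorem stmt8 (k r n : ℕ) (M : Matrix (Fin k) (Fin n) ℝ) (P : Matrix (Fin r) (Fin n) ℝ)
    (q : Fin k → ℝ) (d : Fin r → ℝ)
    (hM : ∀ u : Fin k → ℝ, M.transpose.mulVec u = 0 → u = 0)
    (hfeas : ∃ z : Fin n → ℝ, M.mulVec z = q ∧ ∀ j, P.mulVec z j ≤ d j) :
    (∃ z : Fin n → ℝ, M.mulVec z = q ∧ ∀ j, P.mulVec z j < d j) ↔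
    (∀ (u : Fin k → ℝ) (v : Fin r → ℝ),
        (∑ i, q i * u i) + (∑ j, d j * v j) ≤ 0 →
        M.transpose.mulVec u + P.transpose.mulVec v = 0 →
        (∀ j, 0 ≤ v j) → v = 0) := by
  classical
  constructor
  · rintro ⟨zb, hMz, hPz⟩ u v hsum heq hv
    have key : (∑ l, M.transpose.mulVec u l * zb l) + (∑ l, P.transpose.mulVec v l * zb l) = 0 := by
      rw [← Finset.sum_add_distrib]
      have hc : ∀ l, M.transpose.mulVec u l * zb l + P.transpose.mulVec v l * zb l
          = (M.transpose.mulVec u + P.transpose.mulVec v) l * zb l := fun l => by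
        show _ = (M.transpose.mulVec u l + P.transpose.mulVec v l) * zb l
        ring
      rw [Finset.sum_congr rfl fun l _ => hc l, heq]
      simp
    rw [dot_mulVec_eq, dot_mulVec_eq, hMz] at key
    have e8 : (∑ j, v j * (d j - P.mulVec zb j))
        = (∑ j, d j * v j) - ∑ j, v j * P.mulVec zb j := by
      rw [← Finset.sum_sub_distrib]
      exact Finset.sum_congr rfl fun j _ => by ring
    have e9 : (∑ i, q i * u i) = ∑ i, u i * q i :=
      Finset.sum_congr rfl fun i _ => mul_comm _ _
    have hterm : ∀ j ∈ Finset.univ, (0:ℝ) ≤ v j * (d j - P.mulVec zb j) := fun j _ =>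
      mul_nonneg (hv j) (by linarith [hPz j])
    have hsum2 : (∑ j, v j * (d j - P.mulVec zb j)) ≤ 0 := by
      rw [e8]
      rw [e9] at hsum
      linarith
    have hzero := le_antisymm hsum2 (Finset.sum_nonneg hterm)
    have hall := (Finset.sum_eq_zero_iff_of_nonneg hterm).mp hzero
    funext j
    have hj := hall j (Finset.mem_univ j)
    rcases mul_eq_zero.mp hj with h | h
    · exact h
    · exact absurd h (by have := hPz j; intro hcon; linarith)
  · intro hRHS
    have percoord : ∀ j0 : Fin r,
        ∃ z, M.mulVec z = q ∧ (∀ j, P.mulVec z j ≤ d j) ∧ P.mulVec z j0 < d j0 := by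
      intro j0
      by_contra hno
      push_neg at hno
      have hcons : ∀ z, M.mulVec z = q → (∀ j, P.mulVec z j ≤ d j) →
          (∑ l, -P j0 l * z l) ≤ -d j0 := by
        intro z h1 h2
        have h3 := hno z h1 h2
        have hne : (∑ l, -P j0 l * z l) = -∑ l, P j0 l * z l := by
          rw [← Finset.sum_neg_distrib]
          exact Finset.sum_congr rfl fun _ _ => by ring
        have hP0 : P.mulVec z j0 = ∑ l, P j0 l * z l := rfl
        rw [hP0] at h3
        rw [hne]
        linarith
      obtain ⟨u, v, hv, heqc, hsum⟩ :=
        affineFarkas M P q d (fun l => -P j0 l) (-d j0) hfeas hcons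
      set v' : Fin r → ℝ := fun j => v j + (if j = j0 then 1 else 0) with hv'def
      have hv' : ∀ j, 0 ≤ v' j := fun j => by
        have hval : v' j = v j + (if j = j0 then 1 else 0) := rfl
        rw [hval]
        have : (0:ℝ) ≤ if j = j0 then 1 else 0 := by positivity
        linarith [hv j]
      have hsplitv : ∀ (w : Fin r → ℝ), (∑ j, w j * v' j) = (∑ j, w j * v j) + w j0 := by
        intro w
        have hc : ∀ j, w j * v' j = w j * v j + (if j = j0 then w j else 0) := fun j => by
          have hval : v' j = v j + (if j = j0 then 1 else 0) := rfl
          rw [hval]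
          split <;> ring
        rw [Finset.sum_congr rfl fun j _ => hc j, Finset.sum_add_distrib,
          Finset.sum_ite_eq' Finset.univ j0 w, if_pos (Finset.mem_univ j0)]
      have heq' : M.transpose.mulVec u + P.transpose.mulVec v' = 0 := by
        funext l
        have h4 := congrFun heqc l
        have h4' : M.transpose.mulVec u l + P.transpose.mulVec v l = -P j0 l := h4
        have h5 : P.transpose.mulVec v' l = P.transpose.mulVec v l + P j0 l := by
          show (∑ j, P.transpose l j * v' j) = (∑ j, P.transpose l j * v j) + P j0 l
          rw [hsplitv (fun j => P.transpose l j)]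
          rfl
        show M.transpose.mulVec u l + P.transpose.mulVec v' l = 0
        rw [h5]
        linarith
      have hsum' : (∑ i, q i * u i) + (∑ j, d j * v' j) ≤ 0 := by
        rw [hsplitv d]
        linarith
      have hv0 := hRHS u v' hsum' heq' hv'
      have : v' j0 = 0 := congrFun hv0 j0
      have hval : v' j0 = v j0 + 1 := by simp [hv'def]
      linarith [hv j0]
    have main : ∀ S : Finset (Fin r), ∃ z, M.mulVec z = q ∧ (∀ j, P.mulVec z j ≤ d j) ∧
        ∀ j ∈ S, P.mulVec z j < d j := by
      intro S
      induction S using Finset.induction_on with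
      | empty =>
        obtain ⟨z, h1, h2⟩ := hfeas
        exact ⟨z, h1, h2, fun j hj => absurd hj (Finset.notMem_empty j)⟩
      | @insert j0 S hj0 ih =>
        obtain ⟨z1, hz1M, hz1le, hz1lt⟩ := ih
        obtain ⟨z2, hz2M, hz2le, hz2lt⟩ := percoord j0
        refine ⟨(1/2 : ℝ) • (z1 + z2), ?_, ?_, ?_⟩
        · funext i
          rw [Matrix.mulVec_smul, Matrix.mulVec_add]
          show (1/2 : ℝ) * (M.mulVec z1 i + M.mulVec z2 i) = q i
          rw [hz1M, hz2M]
          show (1/2 : ℝ) * (q i + q i) = q i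
          ring
        · intro j
          rw [Matrix.mulVec_smul, Matrix.mulVec_add]
          show (1/2 : ℝ) * (P.mulVec z1 j + P.mulVec z2 j) ≤ d j
          linarith [hz1le j, hz2le j]
        · intro j hj
          rw [Matrix.mulVec_smul, Matrix.mulVec_add]
          show (1/2 : ℝ) * (P.mulVec z1 j + P.mulVec z2 j) < d j
          rcases Finset.mem_insert.mp hj with h | h
          · subst h
            linarith [hz1le j, hz2lt]
          · linarith [hz1lt j h, hz2le j]
    obtain ⟨z, h1, h2, h3⟩ := main Finset.univ
    exact ⟨z, h1, fun j => h3 j (Finset.mem_univ j)⟩
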